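/- Let L be an 𝔞-valued lattice in a non-degenerate symmetric bilinear space (V,H) over a number field F, and suppose L is not 𝔞-even at a prime 𝔭 with ramification index e_𝔭 := ord_𝔭(2) ≤ 1. Then the quotient L/L_{𝔞-even at 𝔭} is isomorphic to the residue field 𝔽_𝔭 = O_F/𝔭 as abelian groups; in particular it has order N(𝔭). -/

import Mathlib

set_option synthInstance.maxHeartbeats 400000
set_option maxHeartbeats 800000

open NumberField nonZeroDivisors Pointwise

variable {F V : Type*}

/-- The `𝔞`-dual lattice `L^{#𝔞} = {v ∈ V | B(v, L) ⊆ 𝔞}`. -/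
def adual [Field F] [NumberField F] [AddCommGroup V] [Module F V]
    [Module (𝓞 F) V] [IsScalarTower (𝓞 F) F V]
    (B : V →ₗ[F] V →ₗ[F] F) (𝔞 : FractionalIdeal (𝓞 F)⁰ F)
    (L : Submodule (𝓞 F) V) : Submodule (𝓞 F) V where
  carrier := {v | ∀ x ∈ L, B v x ∈ (𝔞 : Submodule (𝓞 F) F)}
  add_mem' := by
    intro a b ha hb x hx
    rw [map_add, LinearMap.add_apply]
    exact add_mem (ha x hx) (hb x hx)
  zero_mem' := by
    intro x hx
    simp
  smul_mem' := by
    intro c v hv x hx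
    have h1 : B (c • v) x = c • B v x := by
      rw [← algebraMap_smul F c v, map_smul, LinearMap.smul_apply, algebraMap_smul]
    simp only [Set.mem_setOf_eq] at *
    rw [h1]
    exact Submodule.smul_mem _ c (hv x hx)

/-- `L` is a lattice in `V`: finitely generated over `𝓞 F` and spanning `V` over `F`. -/
def IsLat [Field F] [NumberField F] [AddCommGroup V] [Module F V]
    [Module (𝓞 F) V] [IsScalarTower (𝓞 F) F V] (L : Submodule (𝓞 F) V) : Prop :=
  L.FG ∧ Submodule.span F (L : Set V) = ⊤

/-- Scaling a lattice by a fractional ideal: `𝔟L` is the smallest `𝓞 F`-submodule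
containing all products `b • x` with `b ∈ 𝔟`, `x ∈ L`. -/
def fsmul [Field F] [NumberField F] [AddCommGroup V] [Module F V]
    [Module (𝓞 F) V] [IsScalarTower (𝓞 F) F V]
    (𝔟 : FractionalIdeal (𝓞 F)⁰ F) (L : Submodule (𝓞 F) V) : Submodule (𝓞 F) V :=
  (((𝔟 : Submodule (𝓞 F) F) : Set F)) • L

/-- if `L` is `𝔞`-valued but not `𝔞`-even at a prime `𝔭` with
`ord_𝔭(2) = 1`, then `L/L_{𝔞-even at 𝔭} ≅ 𝓞_F/𝔭` as abelian groups.  (Since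
`ord_𝔭(2) = 1`, an element `x ∈ L` lies in `L_{𝔞-even at 𝔭}` iff `H(x,x) ∈ 𝔞𝔭`.)
We express the isomorphism by a surjective additive map `L → 𝓞_F/𝔭` whose kernel is
exactly the `𝔞`-even-at-`𝔭` sublattice. -/
theorem index_of_even_sublattice [Field F] [NumberField F] [AddCommGroup V] [Module F V]
    [Module (𝓞 F) V] [IsScalarTower (𝓞 F) F V]
    (H : V →ₗ[F] V →ₗ[F] F) (hsymm : ∀ x y, H x y = H y x)
    (hnd : ∀ v : V, (∀ w : V, H v w = 0) → v = 0)
    (𝔞 : FractionalIdeal (𝓞 F)⁰ F) (h𝔞 : 𝔞 ≠ 0)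
    (𝔭 : Ideal (𝓞 F)) (h𝔭 : 𝔭 ≠ ⊥) (h𝔭p : 𝔭.IsPrime)
    -- ord_𝔭(2) = 1
    (h2mem : (2 : 𝓞 F) ∈ 𝔭) (h2sq : (2 : 𝓞 F) ∉ 𝔭 ^ 2)
    (L : Submodule (𝓞 F) V) (hL : IsLat L)
    (hval : ∀ x ∈ L, ∀ y ∈ L, H x y ∈ (𝔞 : Submodule (𝓞 F) F))
    -- L is not 𝔞-even at 𝔭
    (hnoteven : ∃ x ∈ L,
      H x x ∉ ((𝔞 * (𝔭 : FractionalIdeal (𝓞 F)⁰ F)) : Submodule (𝓞 F) F)) :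
    ∃ φ : L →+ (𝓞 F ⧸ 𝔭), Function.Surjective φ ∧
      ∀ x : L, (φ x = 0 ↔
        H (x : V) (x : V) ∈ ((𝔞 * (𝔭 : FractionalIdeal (𝓞 F)⁰ F)) : Submodule (𝓞 F) F)) := by
  classical
  obtain ⟨x₀, hx₀L, hx₀⟩ := hnoteven
  set a₀ : F := H x₀ x₀ with ha₀def
  set N : FractionalIdeal (𝓞 F)⁰ F := 𝔞 * (𝔭 : FractionalIdeal (𝓞 F)⁰ F) with hNdef
  have hNsub : ∀ z : F, z ∈ (𝔞 : Submodule (𝓞 F) F) *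
      (((𝔭 : FractionalIdeal (𝓞 F)⁰ F) : Submodule (𝓞 F) F)) ↔ z ∈ N := by
    intro z
    rw [← FractionalIdeal.coe_mul]
    exact FractionalIdeal.mem_coe
  have hvalF : ∀ x ∈ L, ∀ y ∈ L, H x y ∈ 𝔞 := fun x hx y hy =>
    FractionalIdeal.mem_coe.mp (hval x hx y hy)
  have ha₀A : a₀ ∈ 𝔞 := hvalF x₀ hx₀L x₀ hx₀L
  have hinv : 𝔞 * 𝔞⁻¹ = 1 := mul_inv_cancel₀ h𝔞
  set J' : FractionalIdeal (𝓞 F)⁰ F :=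
    FractionalIdeal.spanSingleton (𝓞 F)⁰ a₀ * 𝔞⁻¹ with hJ'def
  have hJ'le : J' ≤ 1 := by
    rw [← hinv]
    exact mul_le_mul_left
      ((FractionalIdeal.spanSingleton_le_iff_mem).mpr ha₀A) 𝔞⁻¹
  obtain ⟨J, hJ⟩ := (FractionalIdeal.le_one_iff_exists_coeIdeal).mp hJ'le
  have hJnot : ¬ J ≤ 𝔭 := by
    intro hle
    apply hx₀
    refine (hNsub a₀).mpr ?_
    have h1 : FractionalIdeal.spanSingleton (𝓞 F)⁰ a₀ = J' * 𝔞 := by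
      rw [hJ'def, mul_assoc, mul_comm 𝔞⁻¹ 𝔞, hinv, mul_one]
    have h2 : J' ≤ (𝔭 : FractionalIdeal (𝓞 F)⁰ F) := by
      rw [← hJ]
      exact (FractionalIdeal.coeIdeal_le_coeIdeal F).mpr hle
    have h3 : FractionalIdeal.spanSingleton (𝓞 F)⁰ a₀ ≤ N := by
      rw [h1, hNdef, mul_comm 𝔞]
      exact mul_le_mul_left h2 𝔞
    exact h3 (FractionalIdeal.mem_spanSingleton_self _ a₀)
  haveI hmax : 𝔭.IsMaximal := h𝔭p.isMaximal h𝔭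
  have htop : 𝔭 ⊔ J = ⊤ := by
    refine hmax.1.2 _ (lt_of_le_of_ne le_sup_left fun h => hJnot ?_)
    rw [h]; exact le_sup_right
  obtain ⟨p, hp, t, htJ, hpt⟩ :=
    Submodule.mem_sup.mp (htop ▸ Submodule.mem_top : (1 : 𝓞 F) ∈ 𝔭 ⊔ J)
  have ht' : algebraMap (𝓞 F) F t ∈ J' := by
    rw [← hJ]
    exact (FractionalIdeal.mem_coeIdeal _).mpr ⟨t, htJ, rfl⟩
  obtain ⟨u, huinv, htu⟩ := FractionalIdeal.mem_singleton_mul.mp ht'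
  have htnot : t ∉ 𝔭 := by
    intro ht
    exact hmax.ne_top (Ideal.eq_top_of_isUnit_mem 𝔭 (hpt ▸ Ideal.add_mem 𝔭 hp ht) isUnit_one)
  have hamap : Function.Injective (algebraMap (𝓞 F) F) := IsFractionRing.injective _ _
  -- key lemma 2: if d•a₀ ∈ N then d ∈ 𝔭
  have key2 : ∀ d : 𝓞 F, algebraMap (𝓞 F) F d * a₀ ∈ N → d ∈ 𝔭 := by
    intro d hd
    have h1 : (algebraMap (𝓞 F) F d * a₀) * u ∈ N * 𝔞⁻¹ :=
      FractionalIdeal.mul_mem_mul hd huinv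
    have h2 : N * 𝔞⁻¹ = (𝔭 : FractionalIdeal (𝓞 F)⁰ F) := by
      rw [hNdef, mul_comm 𝔞, mul_assoc, hinv, mul_one]
    have h3 : algebraMap (𝓞 F) F (d * t) = (algebraMap (𝓞 F) F d * a₀) * u := by
      rw [map_mul, htu]; ring
    rw [h2] at h1
    rw [← h3] at h1
    obtain ⟨x, hx, hxe⟩ := (FractionalIdeal.mem_coeIdeal _).mp h1
    have : x = d * t := hamap hxe
    rw [this] at hx
    exact (h𝔭p.mem_or_mem hx).resolve_right htnot
  -- membership helper: p' ∈ 𝔭, m ∈ 𝔞 gives m * algebraMap p' ∈ N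
  have hmemN : ∀ p' ∈ 𝔭, ∀ m ∈ 𝔞, m * algebraMap (𝓞 F) F p' ∈ N := by
    intro p' hp' m hm
    exact FractionalIdeal.mul_mem_mul hm ((FractionalIdeal.mem_coeIdeal _).mpr ⟨p', hp', rfl⟩)
  -- key lemma 1: every m ∈ 𝔞 is ≡ c • a₀ mod N
  have key1 : ∀ m ∈ 𝔞, ∃ c : 𝓞 F, m - algebraMap (𝓞 F) F c * a₀ ∈ N := by
    intro m hm
    have hmu : m * u ∈ 𝔞 * 𝔞⁻¹ := FractionalIdeal.mul_mem_mul hm huinv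
    rw [hinv] at hmu
    obtain ⟨c, hc⟩ := (FractionalIdeal.mem_one_iff _).mp hmu
    refine ⟨c, ?_⟩
    have hpt' : algebraMap (𝓞 F) F p = 1 - algebraMap (𝓞 F) F t := by
      rw [eq_sub_iff_add_eq, ← map_add, hpt, map_one]
    have heq : m - algebraMap (𝓞 F) F c * a₀ = m * algebraMap (𝓞 F) F p := by
      rw [hc, hpt', htu]; ring
    rw [heq]
    exact hmemN p hp m hm
  -- choice of coefficient for each x ∈ L
  have hex : ∀ x : L, ∃ c : 𝓞 F,
      H (x : V) (x : V) - algebraMap (𝓞 F) F c * a₀ ∈ N :=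
    fun x => key1 _ (hvalF x x.2 x x.2)
  choose c hc using hex
  -- uniqueness mod 𝔭
  have huniq : ∀ (x : L) (d : 𝓞 F),
      H (x : V) (x : V) - algebraMap (𝓞 F) F d * a₀ ∈ N → c x - d ∈ 𝔭 := by
    intro x d hd
    apply key2
    have heq : algebraMap (𝓞 F) F (c x - d) * a₀ =
        (H (x : V) (x : V) - algebraMap (𝓞 F) F d * a₀) -
        (H (x : V) (x : V) - algebraMap (𝓞 F) F (c x) * a₀) := by
      rw [map_sub]; ring
    rw [heq]
    exact Submodule.sub_mem _ hd (hc x)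
  have hmk : ∀ (x : L) (d : 𝓞 F),
      H (x : V) (x : V) - algebraMap (𝓞 F) F d * a₀ ∈ N →
      Ideal.Quotient.mk 𝔭 (c x) = Ideal.Quotient.mk 𝔭 d := by
    intro x d hd
    exact (Ideal.Quotient.mk_eq_mk_iff_sub_mem _ _).mpr (huniq x d hd)
  -- additivity input : 2 * H x y ∈ N
  have h2N : ∀ x : L, ∀ y : L, 2 * H (x : V) (y : V) ∈ N := by
    intro x y
    have : 2 * H (x : V) (y : V) = H (x : V) (y : V) * algebraMap (𝓞 F) F 2 := by
      rw [map_ofNat]; ring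
    rw [this]
    exact hmemN 2 h2mem _ (hvalF x x.2 y y.2)
  -- the additive map
  refine ⟨{ toFun := fun x => Ideal.Quotient.mk 𝔭 (c x)
            map_zero' := ?_
            map_add' := ?_ }, ?_, ?_⟩
  · have h0 : H ((0 : L) : V) ((0 : L) : V) - algebraMap (𝓞 F) F 0 * a₀ ∈ N := by
      simp only [ZeroMemClass.coe_zero, map_zero, LinearMap.zero_apply, zero_mul, sub_zero]
      exact zero_mem (N : Submodule (𝓞 F) F)
    show Ideal.Quotient.mk 𝔭 (c 0) = 0
    rw [hmk 0 0 h0, map_zero]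
  · intro x y
    have hexp : H ((x + y : L) : V) ((x + y : L) : V) -
        algebraMap (𝓞 F) F (c x + c y) * a₀ =
        (H (x : V) (x : V) - algebraMap (𝓞 F) F (c x) * a₀) +
        (H (y : V) (y : V) - algebraMap (𝓞 F) F (c y) * a₀) +
        2 * H (x : V) (y : V) := by
      have h1 : ((x + y : L) : V) = (x : V) + (y : V) := rfl
      simp only [h1, map_add, LinearMap.add_apply]
      rw [hsymm (y : V) (x : V)]
      ring
    have hmem : H ((x + y : L) : V) ((x + y : L) : V) -
        algebraMap (𝓞 F) F (c x + c y) * a₀ ∈ N := by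
      rw [hexp]
      exact Submodule.add_mem _ (Submodule.add_mem _ (hc x) (hc y)) (h2N x y)
    show Ideal.Quotient.mk 𝔭 (c (x + y)) = Ideal.Quotient.mk 𝔭 (c x) + Ideal.Quotient.mk 𝔭 (c y)
    rw [hmk (x + y) (c x + c y) hmem, map_add]
  -- surjectivity
  · haveI : Finite (𝓞 F ⧸ 𝔭) := Ideal.finiteQuotientOfFreeOfNeBot 𝔭 h𝔭
    have h2k : (2 : 𝓞 F ⧸ 𝔭) = 0 := by
      have := Ideal.Quotient.eq_zero_iff_mem.mpr h2mem
      rwa [map_ofNat] at this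
    have hsqinj : Function.Injective (fun w : 𝓞 F ⧸ 𝔭 => w * w) := by
      intro a b hab
      simp only at hab
      have hfac : (a - b) * (a + b) = 0 := by linear_combination hab
      rcases mul_eq_zero.mp hfac with h | h
      · exact sub_eq_zero.mp h
      · have : a - b = a + b - 2 * b := by ring
        rw [h2k] at this
        simp only [zero_mul, sub_zero] at this
        rw [h] at this
        exact sub_eq_zero.mp this
    have hsq : Function.Surjective (fun w : 𝓞 F ⧸ 𝔭 => w * w) :=
      Finite.injective_iff_surjective.mp hsqinj
    intro z
    obtain ⟨w, hw⟩ := hsq z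
    obtain ⟨e, rfl⟩ := Ideal.Quotient.mk_surjective w
    refine ⟨⟨e • (x₀ : V), L.smul_mem e hx₀L⟩, ?_⟩
    have hsm : H (e • (x₀ : V)) (e • (x₀ : V)) = algebraMap (𝓞 F) F (e * e) * a₀ := by
      rw [← algebraMap_smul F e (x₀ : V)]
      simp only [map_smul, LinearMap.smul_apply, smul_eq_mul, map_mul]
      rw [← ha₀def]
      ring
    have hmem : H (e • (x₀ : V)) (e • (x₀ : V)) - algebraMap (𝓞 F) F (e * e) * a₀ ∈ N := by
      rw [hsm, sub_self]; exact Submodule.zero_mem _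
    simp only [AddMonoidHom.coe_mk, ZeroHom.coe_mk]
    rw [hmk ⟨e • (x₀ : V), L.smul_mem e hx₀L⟩ (e * e) hmem, map_mul]
    exact hw
  -- kernel
  · intro x
    show Ideal.Quotient.mk 𝔭 (c x) = 0 ↔ _
    rw [Ideal.Quotient.eq_zero_iff_mem, hNsub]
    constructor
    · intro hcx
      have : H (x : V) (x : V) =
          (H (x : V) (x : V) - algebraMap (𝓞 F) F (c x) * a₀) +
          a₀ * algebraMap (𝓞 F) F (c x) := by ring
      rw [this]
      exact Submodule.add_mem _ (hc x) (hmemN (c x) hcx a₀ ha₀A)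
    · intro hH
      apply key2
      have : algebraMap (𝓞 F) F (c x) * a₀ =
          H (x : V) (x : V) - (H (x : V) (x : V) - algebraMap (𝓞 F) F (c x) * a₀) := by ring
      rw [this]
      exact Submodule.sub_mem _ hH (hc x)
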